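/- Degenerate Baillon–Haddad theorem, Lipschitz part (Lemma 2.3(ii)): Let x₁, x₂ ∈ H and let w₁, w₂ ∈ (ker Q)ᗮ satisfy Q w₁ = B x₁ and Q w₂ = B x₂ (so wᵢ is the pseudo-inverse image Q†(B xᵢ)). Then ν² · ⟪Q (w₁ − w₂), w₁ − w₂⟫ ≤ β² · ⟪Q (x₁ − x₂), x₁ − x₂⟫; in other words, ‖w₁ − w₂‖_Q ≤ (β/ν) ‖x₁ − x₂‖_Q, i.e. Q†B is Q-based (β/ν)-Lipschitz continuous. -/

import Mathlib

open RealInnerProductSpace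

/-- Degenerate Baillon–Haddad theorem, Lipschitz part (Lemma 2.3(ii)):
`Q†B` is `Q`-based `(β/ν)`-Lipschitz continuous. -/
theorem stmt_1
    {H : Type*} [NormedAddCommGroup H] [InnerProductSpace ℝ H] [CompleteSpace H]
    (Q : H →L[ℝ] H)
    (hQsym : ∀ x y : H, ⟪Q x, y⟫ = ⟪x, Q y⟫)
    (hQpos : ∀ x : H, 0 ≤ ⟪Q x, x⟫)
    (ν : ℝ) (hν : 0 < ν)
    (hνQ : ∀ w ∈ (LinearMap.ker (Q : H →ₗ[ℝ] H))ᗮ, ν * ‖w‖ ≤ ‖Q w‖)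
    (β : ℝ) (hβ : 0 ≤ β)
    (B : H → H)
    (hB : ∀ x y : H, ‖B x - B y‖ ^ 2 ≤ β * ⟪B x - B y, x - y⟫)
    (hranB : Set.range B ⊆ Set.range Q)
    (x₁ x₂ w₁ w₂ : H)
    (hw₁ : w₁ ∈ (LinearMap.ker (Q : H →ₗ[ℝ] H))ᗮ) (hw₂ : w₂ ∈ (LinearMap.ker (Q : H →ₗ[ℝ] H))ᗮ)
    (hQw₁ : Q w₁ = B x₁) (hQw₂ : Q w₂ = B x₂) :
    ν ^ 2 * ⟪Q (w₁ - w₂), w₁ - w₂⟫ ≤ β ^ 2 * ⟪Q (x₁ - x₂), x₁ - x₂⟫ := by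
  set w := w₁ - w₂ with hw
  set x := x₁ - x₂ with hx
  have hwmem : w ∈ (LinearMap.ker (Q : H →ₗ[ℝ] H))ᗮ := Submodule.sub_mem _ hw₁ hw₂
  have hQw : Q w = B x₁ - B x₂ := by simp [hw, map_sub, hQw₁, hQw₂]
  set a := ⟪Q w, w⟫ with ha
  set b := ⟪Q x, x⟫ with hb
  set c := ⟪Q w, x⟫ with hc
  have ha0 : 0 ≤ a := hQpos w
  have hb0 : 0 ≤ b := hQpos x
  -- cocoercivity
  have h1 : ‖Q w‖ ^ 2 ≤ β * c := by
    have := hB x₁ x₂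
    rw [← hQw] at this
    simpa [hc, hx] using this
  -- ν‖w‖ ≤ ‖Qw‖
  have h2 : ν * ‖w‖ ≤ ‖Q w‖ := hνQ w hwmem
  have h3 : a ≤ ‖Q w‖ * ‖w‖ := real_inner_le_norm _ _
  have h4 : ν * a ≤ ‖Q w‖ ^ 2 := by
    nlinarith [norm_nonneg (Q w), norm_nonneg w]
  -- Cauchy–Schwarz for the semidefinite form
  have hCS : c ^ 2 ≤ a * b := by
    have hquad : ∀ t : ℝ, 0 ≤ b * (t * t) + (2 * c) * t + a := by
      intro t
      have h0 : 0 ≤ ⟪Q (t • x + w), t • x + w⟫ := hQpos _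
      have hxw : ⟪Q x, w⟫ = ⟪Q w, x⟫ := by
        rw [hQsym, real_inner_comm]
      rw [map_add, map_smul] at h0
      simp only [inner_add_left, inner_add_right, real_inner_smul_left,
        real_inner_smul_right] at h0
      rw [hxw] at h0
      simp only [ha, hb, hc]
      nlinarith [h0]
    have := discrim_le_zero hquad
    rw [discrim] at this
    nlinarith [this]
  -- combine
  have h5 : ν * a ≤ β * c := le_trans h4 h1
  have h6 : 0 ≤ β * c := le_trans (mul_nonneg hν.le ha0) h5
  rcases eq_or_lt_of_le ha0 with h | h
  · rw [← h]
    simpa using mul_nonneg (sq_nonneg β) hb0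
  · nlinarith [sq_nonneg (ν * a - β * c), mul_pos hν h]
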